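/- Let μ be a probability measure on ℝ^d and let f_∞ ∈ L²(μ). Let f_0, f_1, …, f_L : ℝ^d → ℝ be continuously differentiable with f_l and ‖∇f_l‖ square-integrable with respect to μ for each l, set f_{−1} := 0 and Δ_l := f_l − f_{l−1}. For each l = 0,…,L let V_l ∈ St(d, r_l) and W_l ∈ St(d, d−r_l) with V_l V_lᵀ + W_l W_lᵀ = I_d, suppose the sliced Poincaré inequality holds for (μ, V_l) with a common constant C_P > 0, and define g⋆_l(x) := ∫ Δ_l(V_l x + W_l z) μ^{(l)}_{Z|X}(dz|x), where (μ^{(l)}_{Z|X}(·|x))_x is a disintegration of the pushforward of μ under y ↦ (V_lᵀ y, W_lᵀ y). Then the multilevel error decomposition holds: ‖f_∞ − ∑_{l=0}^L g⋆_l ∘ (V_lᵀ·)‖_{L²(μ)} ≤ ‖f_∞ − f_L‖_{L²(μ)} + C_P ∑_{l=0}^L ‖(I_d − V_l V_lᵀ) ∇Δ_l‖_{L²(μ;ℝ^d)}. -/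

import Mathlib

open MeasureTheory ProbabilityTheory Matrix
open scoped ProbabilityTheory

noncomputable section

/-- The gradient of `f : ℝ^d → ℝ` at `y`, as the vector of partial derivatives. -/
def grad {d : ℕ} (f : (Fin d → ℝ) → ℝ) (y : Fin d → ℝ) : Fin d → ℝ :=
  fun i => fderiv ℝ f y (Pi.single i 1)

/-- Squared Euclidean norm on `ℝ^d`. -/
def sqnorm {d : ℕ} (v : Fin d → ℝ) : ℝ := ∑ i, v i ^ 2

/-! ### Auxiliary lemmas -/

open scoped ENNReal

section Aux

lemma sqrt_int_sq {α : Type*} [MeasurableSpace α] {μ : Measure α} {f : α → ℝ}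
    (hf : MemLp f 2 μ) :
    Real.sqrt (∫ y, f y ^ 2 ∂μ) = (eLpNorm f 2 μ).toReal := by
  rw [hf.eLpNorm_eq_integral_rpow_norm two_ne_zero ENNReal.ofNat_ne_top]
  rw [ENNReal.toReal_ofReal (by positivity)]
  have h1 : ∀ a, ‖f a‖ ^ (ENNReal.toReal 2) = f a ^ 2 := by
    intro a
    rw [ENNReal.toReal_ofNat, show ((2:ℝ)) = ((2:ℕ):ℝ) by norm_num, Real.rpow_natCast,
      Real.norm_eq_abs, sq_abs]
  simp_rw [h1]
  rw [ENNReal.toReal_ofNat, Real.sqrt_eq_rpow]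
  norm_num

lemma dot_shift {m n : Type*} [Fintype m] [Fintype n] (M : Matrix m n ℝ) (u : m → ℝ) (w : n → ℝ) :
    Mᵀ.mulVec u ⬝ᵥ w = u ⬝ᵥ M.mulVec w := by
  rw [Matrix.mulVec_transpose, ← Matrix.dotProduct_mulVec]

lemma dot_shift' {m n : Type*} [Fintype m] [Fintype n] (M : Matrix m n ℝ) (u : n → ℝ) (w : m → ℝ) :
    M.mulVec u ⬝ᵥ w = u ⬝ᵥ Mᵀ.mulVec w := by
  rw [← Matrix.vecMul_transpose, ← Matrix.dotProduct_mulVec]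

lemma sqnorm_eq_dot {k : ℕ} (v : Fin k → ℝ) : sqnorm v = v ⬝ᵥ v := by
  simp [sqnorm, dotProduct, sq]

lemma sqnorm_nonneg {k : ℕ} (v : Fin k → ℝ) : 0 ≤ sqnorm v := by
  apply Finset.sum_nonneg; intro i _; positivity

variable {d r s : ℕ} {A : Matrix (Fin d) (Fin r) ℝ} {B : Matrix (Fin d) (Fin s) ℝ}

lemma AtB_zero (hA : Aᵀ * A = 1) (hB : Bᵀ * B = 1) (hAB : A * Aᵀ + B * Bᵀ = 1) :
    Aᵀ * B = 0 := by
  have h := congrArg (fun M => Aᵀ * M * B) hAB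
  simp only [Matrix.mul_add, Matrix.add_mul, Matrix.mul_one] at h
  rw [show Aᵀ * (A * Aᵀ) * B = (Aᵀ * A) * (Aᵀ * B) by simp [Matrix.mul_assoc],
      show Aᵀ * (B * Bᵀ) * B = (Aᵀ * B) * (Bᵀ * B) by simp [Matrix.mul_assoc], hA, hB,
      Matrix.one_mul, Matrix.mul_one] at h
  have h2 : Aᵀ * B + Aᵀ * B = Aᵀ * B + 0 := by rw [add_zero]; exact h
  exact add_left_cancel h2

lemma recomb (hAB : A * Aᵀ + B * Bᵀ = 1) (y : Fin d → ℝ) :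
    A.mulVec (Aᵀ.mulVec y) + B.mulVec (Bᵀ.mulVec y) = y := by
  rw [Matrix.mulVec_mulVec, Matrix.mulVec_mulVec, ← Matrix.add_mulVec, hAB, Matrix.one_mulVec]

lemma projX (hA : Aᵀ * A = 1) (hB : Bᵀ * B = 1) (hAB : A * Aᵀ + B * Bᵀ = 1)
    (x : Fin r → ℝ) (z : Fin s → ℝ) :
    Aᵀ.mulVec (A.mulVec x + B.mulVec z) = x := by
  rw [Matrix.mulVec_add, Matrix.mulVec_mulVec, Matrix.mulVec_mulVec, hA,
    AtB_zero hA hB hAB, Matrix.one_mulVec, Matrix.zero_mulVec, add_zero]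

lemma sqnorm_mulVec_iso (hB : Bᵀ * B = 1) (u : Fin s → ℝ) :
    sqnorm (B.mulVec u) = sqnorm u := by
  rw [sqnorm_eq_dot, dot_shift', Matrix.mulVec_mulVec, hB, Matrix.one_mulVec, ← sqnorm_eq_dot]

lemma sqnorm_Bt (hB : Bᵀ * B = 1) (hAB : A * Aᵀ + B * Bᵀ = 1)
    (v : Fin d → ℝ) :
    sqnorm (Bᵀ.mulVec v) = sqnorm (((1 : Matrix (Fin d) (Fin d) ℝ) - A * Aᵀ).mulVec v) := by
  have hP : (1 : Matrix (Fin d) (Fin d) ℝ) - A * Aᵀ = B * Bᵀ := by rw [← hAB]; abel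
  rw [hP, ← Matrix.mulVec_mulVec, sqnorm_mulVec_iso hB]

lemma sqnorm_proj_le (hA : Aᵀ * A = 1) (v : Fin d → ℝ) :
    sqnorm (((1 : Matrix (Fin d) (Fin d) ℝ) - A * Aᵀ).mulVec v) ≤ sqnorm v := by
  set P : Matrix (Fin d) (Fin d) ℝ := 1 - A * Aᵀ with hPdef
  have hsym : Pᵀ = P := by simp [hPdef, Matrix.transpose_sub, Matrix.transpose_mul]
  have hQ : (A * Aᵀ) * (A * Aᵀ) = A * Aᵀ := by
    rw [show (A * Aᵀ) * (A * Aᵀ) = A * (Aᵀ * A) * Aᵀ by simp [Matrix.mul_assoc], hA,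
      Matrix.mul_one]
  have hidem : P * P = P := by
    rw [hPdef, Matrix.mul_sub, Matrix.sub_mul, Matrix.sub_mul, hQ]
    simp only [Matrix.mul_one, Matrix.one_mul]
    abel
  have key : sqnorm (P.mulVec v) = v ⬝ᵥ P.mulVec v := by
    rw [sqnorm_eq_dot, dot_shift', hsym, Matrix.mulVec_mulVec, hidem]
  rw [key, hPdef, Matrix.sub_mulVec, dotProduct_sub, Matrix.one_mulVec, ← sqnorm_eq_dot]
  have h2 : v ⬝ᵥ (A * Aᵀ).mulVec v = sqnorm (Aᵀ.mulVec v) := by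
    rw [← Matrix.mulVec_mulVec, ← dot_shift A v (Aᵀ.mulVec v), ← sqnorm_eq_dot]
  rw [h2]
  linarith [sqnorm_nonneg (Aᵀ.mulVec v)]

lemma clm_apply_eq {k : ℕ} (L : (Fin k → ℝ) →L[ℝ] ℝ) (u : Fin k → ℝ) :
    L u = ∑ j, u j * L (Pi.single j 1) := by
  conv_lhs => rw [← Finset.univ_sum_single u]
  rw [map_sum]
  refine Finset.sum_congr rfl fun j _ => ?_
  have h : (Pi.single j (u j) : Fin k → ℝ) = u j • (Pi.single j 1 : Fin k → ℝ) := by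
    rw [← Pi.single_smul, smul_eq_mul, mul_one]
  rw [h, _root_.map_smul, smul_eq_mul]

def mvCLM {k m : ℕ} (B : Matrix (Fin k) (Fin m) ℝ) : (Fin m → ℝ) →L[ℝ] (Fin k → ℝ) :=
  LinearMap.toContinuousLinearMap (Matrix.mulVecLin B)

lemma mvCLM_apply {k m : ℕ} (B : Matrix (Fin k) (Fin m) ℝ) (z : Fin m → ℝ) :
    mvCLM B z = B.mulVec z := rfl

lemma mulVec_continuous {k m : ℕ} (B : Matrix (Fin k) (Fin m) ℝ) :
    Continuous (fun z => B.mulVec z) := (mvCLM B).continuous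

lemma grad_comp {k m : ℕ} {f : (Fin k → ℝ) → ℝ} (hf : ContDiff ℝ 1 f)
    (B : Matrix (Fin k) (Fin m) ℝ) (c : Fin k → ℝ) (g0 : ℝ) (z : Fin m → ℝ) :
    grad (fun w => f (c + B.mulVec w) - g0) z = Bᵀ.mulVec (grad f (c + B.mulVec z)) := by
  have haff : HasFDerivAt (fun w : Fin m → ℝ => c + B.mulVec w) (mvCLM B) z := by
    exact ((mvCLM B).hasFDerivAt (x := z)).const_add c
  have hdf : HasFDerivAt f (fderiv ℝ f (c + B.mulVec z)) (c + B.mulVec z) :=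
    (hf.differentiable one_ne_zero (c + B.mulVec z)).hasFDerivAt
  have hcomp : HasFDerivAt (fun w : Fin m → ℝ => f (c + B.mulVec w) - g0)
      ((fderiv ℝ f (c + B.mulVec z)).comp (mvCLM B)) z := (hdf.comp z haff).sub_const g0
  funext i
  show fderiv ℝ (fun w : Fin m → ℝ => f (c + B.mulVec w) - g0) z (Pi.single i 1)
      = Bᵀ.mulVec (grad f (c + B.mulVec z)) i
  rw [hcomp.fderiv]
  show fderiv ℝ f (c + B.mulVec z) (mvCLM B (Pi.single i 1)) = _
  rw [mvCLM_apply, show B.mulVec (Pi.single i 1) = fun j => B j i * 1 from by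
    ext j; simp [Matrix.mulVec, dotProduct, Pi.single_apply]]
  rw [clm_apply_eq (fderiv ℝ f (c + B.mulVec z)) (fun j => B j i * 1)]
  simp only [mul_one]
  rfl

lemma grad_continuous {k : ℕ} {f : (Fin k → ℝ) → ℝ} (hf : ContDiff ℝ 1 f) :
    Continuous (grad f) := by
  apply continuous_pi
  intro i
  exact (hf.continuous_fderiv one_ne_zero).clm_apply continuous_const

end Aux

/-! ### Change of variables -/

section CoV

variable {d r s : ℕ} {A : Matrix (Fin d) (Fin r) ℝ} {B : Matrix (Fin d) (Fin s) ℝ}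
  {μ : Measure (Fin d → ℝ)} [IsProbabilityMeasure μ]
  {κ : Kernel (Fin r → ℝ) (Fin s → ℝ)} [IsMarkovKernel κ]

lemma cov (hAB : A * Aᵀ + B * Bᵀ = 1)
    (hdis : μ.map (fun y => (Aᵀ.mulVec y, Bᵀ.mulVec y)) = (μ.map (Aᵀ.mulVec ·)) ⊗ₘ κ)
    (F : (Fin d → ℝ) → ℝ≥0∞) (hF : Measurable F) :
    ∫⁻ y, F y ∂μ
      = ∫⁻ x, ∫⁻ z, F (A.mulVec x + B.mulVec z) ∂(κ x) ∂(μ.map (Aᵀ.mulVec ·)) := by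
  have mA : Measurable (fun y : Fin d → ℝ => Aᵀ.mulVec y) := (mulVec_continuous Aᵀ).measurable
  have mB : Measurable (fun y : Fin d → ℝ => Bᵀ.mulVec y) := (mulVec_continuous Bᵀ).measurable
  have mΦ : Measurable (fun y : Fin d → ℝ => (Aᵀ.mulVec y, Bᵀ.mulVec y)) := mA.prodMk mB
  have mΨ : Measurable (fun p : (Fin r → ℝ) × (Fin s → ℝ) => A.mulVec p.1 + B.mulVec p.2) :=
    (((mulVec_continuous A).measurable).comp measurable_fst).add
      (((mulVec_continuous B).measurable).comp measurable_snd)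
  haveI : SFinite (μ.map (Aᵀ.mulVec ·)) := by
    haveI : IsProbabilityMeasure (μ.map (Aᵀ.mulVec ·)) := Measure.isProbabilityMeasure_map mA.aemeasurable
    infer_instance
  calc ∫⁻ y, F y ∂μ
      = ∫⁻ y, (fun p : (Fin r → ℝ) × (Fin s → ℝ) => F (A.mulVec p.1 + B.mulVec p.2))
          ((fun y : Fin d → ℝ => (Aᵀ.mulVec y, Bᵀ.mulVec y)) y) ∂μ := by
        refine lintegral_congr fun y => ?_
        simp only
        rw [recomb hAB]
    _ = ∫⁻ p, F (A.mulVec p.1 + B.mulVec p.2) ∂(μ.map (fun y => (Aᵀ.mulVec y, Bᵀ.mulVec y))) :=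
        (lintegral_map (hF.comp mΨ) mΦ).symm
    _ = ∫⁻ p, F (A.mulVec p.1 + B.mulVec p.2) ∂((μ.map (Aᵀ.mulVec ·)) ⊗ₘ κ) := by rw [hdis]
    _ = ∫⁻ x, ∫⁻ z, F (A.mulVec x + B.mulVec z) ∂(κ x) ∂(μ.map (Aᵀ.mulVec ·)) :=
        Measure.lintegral_compProd (hF.comp mΨ)

end CoV

/-! ### Per-level estimate -/

section Level

lemma sqnorm_continuous {k : ℕ} : Continuous (sqnorm : (Fin k → ℝ) → ℝ) := by
  unfold sqnorm
  exact continuous_finset_sum _ fun i _ => (continuous_apply i).pow 2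

variable {d r s : ℕ} {A : Matrix (Fin d) (Fin r) ℝ} {B : Matrix (Fin d) (Fin s) ℝ}
  {μ : Measure (Fin d → ℝ)} [IsProbabilityMeasure μ]
  {κ : Kernel (Fin r → ℝ) (Fin s → ℝ)} [IsMarkovKernel κ]

lemma level (hA : Aᵀ * A = 1) (hB : Bᵀ * B = 1) (hAB : A * Aᵀ + B * Bᵀ = 1)
    (hdis : μ.map (fun y => (Aᵀ.mulVec y, Bᵀ.mulVec y)) = (μ.map (Aᵀ.mulVec ·)) ⊗ₘ κ)
    {CP : ℝ} (hCP : 0 < CP)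
    (hP : ∀ᵐ x ∂(μ.map (Aᵀ.mulVec ·)), ∀ h : (Fin s → ℝ) → ℝ,
      ContDiff ℝ 1 h → MemLp h 2 (κ x) →
      Integrable (fun z => sqnorm (grad h z)) (κ x) →
      (∫ z, h z ∂(κ x)) = 0 →
      Real.sqrt (∫ z, (h z) ^ 2 ∂(κ x)) ≤ CP * Real.sqrt (∫ z, sqnorm (grad h z) ∂(κ x)))
    {f : (Fin d → ℝ) → ℝ} (hf : ContDiff ℝ 1 f) (hf2 : MemLp f 2 μ)
    (hgrad : Integrable (fun y => sqnorm (grad f y)) μ)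
    {g : (Fin r → ℝ) → ℝ}
    (hg : ∀ x, g x = ∫ z, f (A.mulVec x + B.mulVec z) ∂(κ x)) :
    MemLp (fun y => f y - g (Aᵀ.mulVec y)) 2 μ ∧
    Real.sqrt (∫ y, (f y - g (Aᵀ.mulVec y)) ^ 2 ∂μ) ≤
      CP * Real.sqrt (∫ y, sqnorm
        (((1 : Matrix (Fin d) (Fin d) ℝ) - A * Aᵀ).mulVec (grad f y)) ∂μ) := by
  have mA : Measurable (fun y : Fin d → ℝ => Aᵀ.mulVec y) := (mulVec_continuous Aᵀ).measurable
  haveI : IsProbabilityMeasure (μ.map (Aᵀ.mulVec ·)) := Measure.isProbabilityMeasure_map mA.aemeasurable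
  have hfc : Continuous f := hf.continuous
  -- strong measurability of g
  have hg_sm : StronglyMeasurable g := by
    have hgeq : g = fun x => ∫ z, f (A.mulVec x + B.mulVec z) ∂(κ x) := funext hg
    rw [hgeq]
    apply StronglyMeasurable.integral_kernel_prod_right
    apply Continuous.stronglyMeasurable
    show Continuous fun p : (Fin r → ℝ) × (Fin s → ℝ) => f (A.mulVec p.1 + B.mulVec p.2)
    exact hfc.comp (((mulVec_continuous A).comp continuous_fst).add
      ((mulVec_continuous B).comp continuous_snd))
  have hG_sm : AEStronglyMeasurable (fun y => f y - g (Aᵀ.mulVec y)) μ :=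
    (hfc.stronglyMeasurable.sub (hg_sm.comp_measurable mA)).aestronglyMeasurable
  have hf2sq : Integrable (fun y => f y ^ 2) μ :=
    (memLp_two_iff_integrable_sq hf2.aestronglyMeasurable).mp hf2
  -- the gradient-term integrand
  have hcont_gradterm : Continuous
      (fun y => sqnorm (((1 : Matrix (Fin d) (Fin d) ℝ) - A * Aᵀ).mulVec (grad f y))) :=
    sqnorm_continuous.comp ((mulVec_continuous _).comp (grad_continuous hf))
  have hRint : Integrable
      (fun y => sqnorm (((1 : Matrix (Fin d) (Fin d) ℝ) - A * Aᵀ).mulVec (grad f y))) μ := by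
    refine hgrad.mono' hcont_gradterm.aestronglyMeasurable (ae_of_all _ fun y => ?_)
    rw [Real.norm_eq_abs, abs_of_nonneg (sqnorm_nonneg _)]
    exact sqnorm_proj_le hA _
  set R := ∫ y, sqnorm (((1 : Matrix (Fin d) (Fin d) ℝ) - A * Aᵀ).mulVec (grad f y)) ∂μ with hR
  have hR0 : 0 ≤ R := integral_nonneg fun y => sqnorm_nonneg _
  -- measurable integrands
  have measFsq : Measurable (fun y => ENNReal.ofReal (f y ^ 2)) :=
    ((hfc.measurable).pow_const 2).ennreal_ofReal
  have measH : Measurable (fun y =>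
      ENNReal.ofReal (sqnorm (((1 : Matrix (Fin d) (Fin d) ℝ) - A * Aᵀ).mulVec (grad f y)))) :=
    hcont_gradterm.measurable.ennreal_ofReal
  -- a.e. finiteness of conditional second moments
  have hIa_meas : Measurable (fun x =>
      ∫⁻ z, ENNReal.ofReal (f (A.mulVec x + B.mulVec z) ^ 2) ∂κ x) := by
    apply Measurable.lintegral_kernel_prod_right
    exact measFsq.comp ((((mulVec_continuous A).comp continuous_fst).add
      ((mulVec_continuous B).comp continuous_snd)).measurable)
  have hIb_meas : Measurable (fun x => ∫⁻ z, ENNReal.ofReal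
      (sqnorm (((1 : Matrix (Fin d) (Fin d) ℝ) - A * Aᵀ).mulVec
        (grad f (A.mulVec x + B.mulVec z)))) ∂κ x) := by
    apply Measurable.lintegral_kernel_prod_right
    exact measH.comp ((((mulVec_continuous A).comp continuous_fst).add
      ((mulVec_continuous B).comp continuous_snd)).measurable)
  have hae_a : ∀ᵐ x ∂(μ.map (Aᵀ.mulVec ·)),
      (∫⁻ z, ENNReal.ofReal (f (A.mulVec x + B.mulVec z) ^ 2) ∂κ x) < ⊤ := by
    refine ae_lt_top hIa_meas ?_
    rw [← cov hAB hdis _ measFsq,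
      ← ofReal_integral_eq_lintegral_ofReal hf2sq (ae_of_all _ fun y => sq_nonneg _)]
    exact ENNReal.ofReal_ne_top
  have hae_b : ∀ᵐ x ∂(μ.map (Aᵀ.mulVec ·)),
      (∫⁻ z, ENNReal.ofReal (sqnorm (((1 : Matrix (Fin d) (Fin d) ℝ) - A * Aᵀ).mulVec
        (grad f (A.mulVec x + B.mulVec z)))) ∂κ x) < ⊤ := by
    refine ae_lt_top hIb_meas ?_
    rw [← cov hAB hdis _ measH,
      ← ofReal_integral_eq_lintegral_ofReal hRint (ae_of_all _ fun y => sqnorm_nonneg _)]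
    exact ENNReal.ofReal_ne_top
  -- the key conditional Poincaré estimate
  have key : ∀ᵐ x ∂(μ.map (Aᵀ.mulVec ·)),
      (∫⁻ z, ENNReal.ofReal ((f (A.mulVec x + B.mulVec z) - g x) ^ 2) ∂κ x)
        ≤ ENNReal.ofReal (CP ^ 2) * ∫⁻ z, ENNReal.ofReal
          (sqnorm (((1 : Matrix (Fin d) (Fin d) ℝ) - A * Aᵀ).mulVec
            (grad f (A.mulVec x + B.mulVec z)))) ∂κ x := by
    filter_upwards [hae_a, hae_b, hP] with x ha hb hpoin
    set c : Fin d → ℝ := A.mulVec x with hc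
    have hφc : Continuous (fun z : Fin s → ℝ => f (c + B.mulVec z)) :=
      hfc.comp (continuous_const.add (mulVec_continuous B))
    have hφ2 : MemLp (fun z => f (c + B.mulVec z)) 2 (κ x) := by
      rw [memLp_two_iff_integrable_sq hφc.aestronglyMeasurable]
      refine ⟨(hφc.pow 2).aestronglyMeasurable, ?_⟩
      rw [hasFiniteIntegral_iff_ofReal (ae_of_all _ fun z => sq_nonneg _)]
      exact ha
    have hφint : Integrable (fun z => f (c + B.mulVec z)) (κ x) := hφ2.integrable one_le_two
    -- zero mean
    have hmean : (∫ z, (f (c + B.mulVec z) - g x) ∂κ x) = 0 := by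
      rw [integral_sub hφint (integrable_const _), integral_const]
      simp only [probReal_univ, one_smul]
      rw [hg x, ← hc, sub_self]
    -- smoothness
    have haffc : ContDiff ℝ 1 (fun z : Fin s → ℝ => c + B.mulVec z) := by
      have h2 := (mvCLM B).contDiff (n := (1 : WithTop ℕ∞))
      exact contDiff_const.add h2
    have hh1 : ContDiff ℝ 1 (fun z => f (c + B.mulVec z) - g x) :=
      (hf.comp haffc).sub contDiff_const
    have hh2 : MemLp (fun z => f (c + B.mulVec z) - g x) 2 (κ x) :=
      hφ2.sub (memLp_const (g x))
    -- gradient of the conditional function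
    have hsq : ∀ z, sqnorm (grad (fun w => f (c + B.mulVec w) - g x) z)
        = sqnorm (((1 : Matrix (Fin d) (Fin d) ℝ) - A * Aᵀ).mulVec
            (grad f (c + B.mulVec z))) := by
      intro z
      rw [grad_comp hf B c (g x) z, sqnorm_Bt hB hAB]
    have hcontg : Continuous (fun z => sqnorm
        (((1 : Matrix (Fin d) (Fin d) ℝ) - A * Aᵀ).mulVec (grad f (c + B.mulVec z)))) :=
      hcont_gradterm.comp (continuous_const.add (mulVec_continuous B))
    have hintg : Integrable (fun z => sqnorm
        (((1 : Matrix (Fin d) (Fin d) ℝ) - A * Aᵀ).mulVec (grad f (c + B.mulVec z)))) (κ x) := by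
      refine ⟨hcontg.aestronglyMeasurable, ?_⟩
      rw [hasFiniteIntegral_iff_ofReal (ae_of_all _ fun z => sqnorm_nonneg _)]
      exact hb
    have hgradint : Integrable
        (fun z => sqnorm (grad (fun w => f (c + B.mulVec w) - g x) z)) (κ x) := by
      rw [show (fun z => sqnorm (grad (fun w => f (c + B.mulVec w) - g x) z))
          = fun z => sqnorm (((1 : Matrix (Fin d) (Fin d) ℝ) - A * Aᵀ).mulVec
            (grad f (c + B.mulVec z))) from funext hsq]
      exact hintg
    -- apply Poincaré
    have hpo := hpoin (fun z => f (c + B.mulVec z) - g x) hh1 hh2 hgradint hmean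
    have hint_h2 : Integrable (fun z => (f (c + B.mulVec z) - g x) ^ 2) (κ x) :=
      (memLp_two_iff_integrable_sq hh2.aestronglyMeasurable).mp hh2
    have h2nonneg : 0 ≤ ∫ z, (f (c + B.mulVec z) - g x) ^ 2 ∂κ x :=
      integral_nonneg fun z => sq_nonneg _
    have hgnonneg : 0 ≤ ∫ z, sqnorm (grad (fun w => f (c + B.mulVec w) - g x) z) ∂κ x :=
      integral_nonneg fun z => sqnorm_nonneg _
    have hsqle : ∫ z, (f (c + B.mulVec z) - g x) ^ 2 ∂κ x
        ≤ CP ^ 2 * ∫ z, sqnorm (grad (fun w => f (c + B.mulVec w) - g x) z) ∂κ x := by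
      nlinarith [Real.sq_sqrt h2nonneg, Real.sq_sqrt hgnonneg,
        Real.sqrt_nonneg (∫ z, (f (c + B.mulVec z) - g x) ^ 2 ∂κ x),
        Real.sqrt_nonneg (∫ z, sqnorm (grad (fun w => f (c + B.mulVec w) - g x) z) ∂κ x)]
    have hgint_eq : ∫ z, sqnorm (grad (fun w => f (c + B.mulVec w) - g x) z) ∂κ x
        = ∫ z, sqnorm (((1 : Matrix (Fin d) (Fin d) ℝ) - A * Aᵀ).mulVec
            (grad f (c + B.mulVec z))) ∂κ x := by
      exact integral_congr_ae (ae_of_all _ fun z => hsq z)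
    calc ∫⁻ z, ENNReal.ofReal ((f (c + B.mulVec z) - g x) ^ 2) ∂κ x
        = ENNReal.ofReal (∫ z, (f (c + B.mulVec z) - g x) ^ 2 ∂κ x) :=
          (ofReal_integral_eq_lintegral_ofReal hint_h2
            (ae_of_all _ fun z => sq_nonneg _)).symm
      _ ≤ ENNReal.ofReal (CP ^ 2 * ∫ z, sqnorm
            (grad (fun w => f (c + B.mulVec w) - g x) z) ∂κ x) :=
          ENNReal.ofReal_le_ofReal hsqle
      _ = ENNReal.ofReal (CP ^ 2) * ENNReal.ofReal (∫ z, sqnorm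
            (grad (fun w => f (c + B.mulVec w) - g x) z) ∂κ x) :=
          ENNReal.ofReal_mul (by positivity)
      _ = ENNReal.ofReal (CP ^ 2) * ∫⁻ z, ENNReal.ofReal
            (sqnorm (((1 : Matrix (Fin d) (Fin d) ℝ) - A * Aᵀ).mulVec
              (grad f (c + B.mulVec z)))) ∂κ x := by
          rw [hgint_eq, ofReal_integral_eq_lintegral_ofReal hintg
            (ae_of_all _ fun z => sqnorm_nonneg _)]
  -- global bound on the lintegral
  have measG : Measurable (fun y => f y - g (Aᵀ.mulVec y)) :=
    hfc.measurable.sub (hg_sm.measurable.comp mA)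
  have measGsq : Measurable (fun y => ENNReal.ofReal ((f y - g (Aᵀ.mulVec y)) ^ 2)) :=
    (measG.pow_const 2).ennreal_ofReal
  have main : ∫⁻ y, ENNReal.ofReal ((f y - g (Aᵀ.mulVec y)) ^ 2) ∂μ
      ≤ ENNReal.ofReal (CP ^ 2 * R) := by
    rw [cov hAB hdis _ measGsq]
    have step1 : ∫⁻ x, ∫⁻ z, ENNReal.ofReal
          ((f (A.mulVec x + B.mulVec z) - g (Aᵀ.mulVec (A.mulVec x + B.mulVec z))) ^ 2)
          ∂κ x ∂(μ.map (Aᵀ.mulVec ·))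
        = ∫⁻ x, ∫⁻ z, ENNReal.ofReal
          ((f (A.mulVec x + B.mulVec z) - g x) ^ 2) ∂κ x ∂(μ.map (Aᵀ.mulVec ·)) := by
      refine lintegral_congr fun x => lintegral_congr fun z => ?_
      rw [projX hA hB hAB]
    rw [step1]
    calc ∫⁻ x, ∫⁻ z, ENNReal.ofReal ((f (A.mulVec x + B.mulVec z) - g x) ^ 2)
          ∂κ x ∂(μ.map (Aᵀ.mulVec ·))
        ≤ ∫⁻ x, ENNReal.ofReal (CP ^ 2) * ∫⁻ z, ENNReal.ofReal
            (sqnorm (((1 : Matrix (Fin d) (Fin d) ℝ) - A * Aᵀ).mulVec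
              (grad f (A.mulVec x + B.mulVec z)))) ∂κ x ∂(μ.map (Aᵀ.mulVec ·)) :=
          lintegral_mono_ae key
      _ = ENNReal.ofReal (CP ^ 2) * ∫⁻ x, ∫⁻ z, ENNReal.ofReal
            (sqnorm (((1 : Matrix (Fin d) (Fin d) ℝ) - A * Aᵀ).mulVec
              (grad f (A.mulVec x + B.mulVec z)))) ∂κ x ∂(μ.map (Aᵀ.mulVec ·)) :=
          lintegral_const_mul' _ _ ENNReal.ofReal_ne_top
      _ = ENNReal.ofReal (CP ^ 2) * ∫⁻ y, ENNReal.ofReal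
            (sqnorm (((1 : Matrix (Fin d) (Fin d) ℝ) - A * Aᵀ).mulVec (grad f y))) ∂μ := by
          rw [← cov hAB hdis _ measH]
      _ = ENNReal.ofReal (CP ^ 2) * ENNReal.ofReal R := by
          rw [← ofReal_integral_eq_lintegral_ofReal hRint
            (ae_of_all _ fun y => sqnorm_nonneg _)]
      _ = ENNReal.ofReal (CP ^ 2 * R) := (ENNReal.ofReal_mul (by positivity)).symm
  -- conclude
  have hGint_sq : Integrable (fun y => (f y - g (Aᵀ.mulVec y)) ^ 2) μ := by
    refine ⟨((measG.pow_const 2).aestronglyMeasurable), ?_⟩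
    rw [hasFiniteIntegral_iff_ofReal (ae_of_all _ fun y => sq_nonneg _)]
    exact lt_of_le_of_lt main ENNReal.ofReal_lt_top
  have hGmem : MemLp (fun y => f y - g (Aᵀ.mulVec y)) 2 μ :=
    (memLp_two_iff_integrable_sq hG_sm).mpr hGint_sq
  refine ⟨hGmem, ?_⟩
  have hle : ∫ y, (f y - g (Aᵀ.mulVec y)) ^ 2 ∂μ ≤ CP ^ 2 * R := by
    rw [← ENNReal.ofReal_le_ofReal_iff (by positivity)]
    rw [ofReal_integral_eq_lintegral_ofReal hGint_sq (ae_of_all _ fun y => sq_nonneg _)]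
    exact main
  calc Real.sqrt (∫ y, (f y - g (Aᵀ.mulVec y)) ^ 2 ∂μ)
      ≤ Real.sqrt (CP ^ 2 * R) := Real.sqrt_le_sqrt hle
    _ = CP * Real.sqrt R := by
        rw [Real.sqrt_mul (by positivity), Real.sqrt_sq hCP.le]

end Level

/-- the multilevel error decomposition
`‖f_∞ − ∑_{l=0}^L g⋆_l ∘ (V_lᵀ·)‖ ≤ ‖f_∞ − f_L‖ + C_P ∑_{l=0}^L ‖(I − V_l V_lᵀ)∇Δ_l‖`,
where `Δ_l = f_l − f_{l−1}` with `f_{−1} = 0`. -/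
theorem multilevel_error_decomposition
    {d L : ℕ} (μ : Measure (Fin d → ℝ)) [IsProbabilityMeasure μ]
    (finf : (Fin d → ℝ) → ℝ) (hfinf : MemLp finf 2 μ)
    (fs : ℕ → (Fin d → ℝ) → ℝ)
    (hfs : ∀ l ≤ L, ContDiff ℝ 1 (fs l)) (hfs2 : ∀ l ≤ L, MemLp (fs l) 2 μ)
    (Δ : ℕ → (Fin d → ℝ) → ℝ)
    (hΔ : ∀ l, Δ l = if l = 0 then fs 0 else fun y => fs l y - fs (l - 1) y)
    (hgradL2 : ∀ l ≤ L, Integrable (fun y => sqnorm (grad (Δ l) y)) μ)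
    (r s : ℕ → ℕ)
    (V : (l : ℕ) → Matrix (Fin d) (Fin (r l)) ℝ)
    (W : (l : ℕ) → Matrix (Fin d) (Fin (s l)) ℝ)
    (hV : ∀ l ≤ L, (V l)ᵀ * V l = 1) (hW : ∀ l ≤ L, (W l)ᵀ * W l = 1)
    (hVW : ∀ l ≤ L, V l * (V l)ᵀ + W l * (W l)ᵀ = 1)
    -- disintegrations of the pushforwards of μ under y ↦ (V_lᵀy, W_lᵀy)
    (κ : (l : ℕ) → Kernel (Fin (r l) → ℝ) (Fin (s l) → ℝ))
    (hκ : ∀ l, IsMarkovKernel (κ l))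
    (hdis : ∀ l ≤ L, μ.map (fun y => ((V l)ᵀ.mulVec y, (W l)ᵀ.mulVec y)) =
      (μ.map ((V l)ᵀ.mulVec ·)) ⊗ₘ κ l)
    -- the sliced Poincaré inequality for each (μ, V_l) with common constant C_P
    (CP : ℝ) (hCP : 0 < CP)
    (hPoincare : ∀ l ≤ L, ∀ᵐ x ∂(μ.map ((V l)ᵀ.mulVec ·)), ∀ h : (Fin (s l) → ℝ) → ℝ,
      ContDiff ℝ 1 h → MemLp h 2 (κ l x) →
      Integrable (fun z => sqnorm (grad h z)) (κ l x) →
      (∫ z, h z ∂(κ l x)) = 0 →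
      Real.sqrt (∫ z, (h z) ^ 2 ∂(κ l x)) ≤
        CP * Real.sqrt (∫ z, sqnorm (grad h z) ∂(κ l x)))
    -- the conditional averages g⋆_l of the differences Δ_l
    (gstar : (l : ℕ) → (Fin (r l) → ℝ) → ℝ)
    (hgstar : ∀ l ≤ L, ∀ x, gstar l x = ∫ z, Δ l ((V l).mulVec x + (W l).mulVec z) ∂(κ l x)) :
    Real.sqrt (∫ y, (finf y - ∑ l ∈ Finset.range (L + 1), gstar l ((V l)ᵀ.mulVec y)) ^ 2 ∂μ) ≤
      Real.sqrt (∫ y, (finf y - fs L y) ^ 2 ∂μ) +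
        CP * ∑ l ∈ Finset.range (L + 1),
          Real.sqrt (∫ y, sqnorm
            (((1 : Matrix (Fin d) (Fin d) ℝ) - V l * (V l)ᵀ).mulVec (grad (Δ l) y)) ∂μ) := by
  -- properties of the increments
  have hΔc : ∀ l ≤ L, ContDiff ℝ 1 (Δ l) := by
    intro l hl
    rw [hΔ l]
    by_cases h0 : l = 0
    · rw [if_pos h0]; exact hfs 0 (Nat.zero_le L)
    · rw [if_neg h0]
      exact (hfs l hl).sub (hfs (l - 1) (le_trans (Nat.sub_le l 1) hl))
  have hΔ2 : ∀ l ≤ L, MemLp (Δ l) 2 μ := by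
    intro l hl
    rw [hΔ l]
    by_cases h0 : l = 0
    · rw [if_pos h0]; exact hfs2 0 (Nat.zero_le L)
    · rw [if_neg h0]
      exact ((hfs2 l hl).sub (hfs2 (l - 1) (le_trans (Nat.sub_le l 1) hl)))
  -- per-level estimates
  have hlev : ∀ l ≤ L,
      MemLp (fun y => Δ l y - gstar l ((V l)ᵀ.mulVec y)) 2 μ ∧
      Real.sqrt (∫ y, (Δ l y - gstar l ((V l)ᵀ.mulVec y)) ^ 2 ∂μ) ≤
        CP * Real.sqrt (∫ y, sqnorm
          (((1 : Matrix (Fin d) (Fin d) ℝ) - V l * (V l)ᵀ).mulVec (grad (Δ l) y)) ∂μ) := by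
    intro l hl
    haveI := hκ l
    exact level (hV l hl) (hW l hl) (hVW l hl) (hdis l hl) hCP (hPoincare l hl)
      (hΔc l hl) (hΔ2 l hl) (hgradL2 l hl) (hgstar l hl)
  -- telescoping
  have htel : ∀ n : ℕ, ∀ y, ∑ l ∈ Finset.range (n + 1), Δ l y = fs n y := by
    intro n
    induction n with
    | zero => intro y; rw [Finset.sum_range_one, hΔ 0, if_pos rfl]
    | succ n ih =>
      intro y
      rw [Finset.sum_range_succ, ih y, hΔ (n + 1), if_neg (Nat.succ_ne_zero n)]
      simp only [Nat.add_sub_cancel]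
      ring
  -- pointwise decomposition
  have hdecomp : (fun y => finf y - ∑ l ∈ Finset.range (L + 1), gstar l ((V l)ᵀ.mulVec y))
      = (fun y => finf y - fs L y)
        + ∑ l ∈ Finset.range (L + 1), (fun y => Δ l y - gstar l ((V l)ᵀ.mulVec y)) := by
    funext y
    simp only [Pi.add_apply, Finset.sum_apply]
    rw [Finset.sum_sub_distrib, htel L y]
    ring
  -- MemLp facts
  have hF0 : MemLp (fun y => finf y - fs L y) 2 μ := hfinf.sub (hfs2 L le_rfl)
  have hGmem : ∀ l ∈ Finset.range (L + 1),
      MemLp (fun y => Δ l y - gstar l ((V l)ᵀ.mulVec y)) 2 μ :=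
    fun l hl => (hlev l (Nat.lt_succ_iff.mp (Finset.mem_range.mp hl))).1
  have hSum : MemLp (∑ l ∈ Finset.range (L + 1),
      (fun y => Δ l y - gstar l ((V l)ᵀ.mulVec y))) 2 μ :=
    memLp_finset_sum' _ hGmem
  have hS : MemLp (fun y => finf y - ∑ l ∈ Finset.range (L + 1),
      gstar l ((V l)ᵀ.mulVec y)) 2 μ := by
    rw [hdecomp]; exact hF0.add hSum
  -- triangle inequality at the level of eLpNorm
  have htri : eLpNorm (fun y => finf y - ∑ l ∈ Finset.range (L + 1),
        gstar l ((V l)ᵀ.mulVec y)) 2 μ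
      ≤ eLpNorm (fun y => finf y - fs L y) 2 μ
        + ∑ l ∈ Finset.range (L + 1), eLpNorm
          (fun y => Δ l y - gstar l ((V l)ᵀ.mulVec y)) 2 μ := by
    rw [hdecomp]
    calc eLpNorm ((fun y => finf y - fs L y) + ∑ l ∈ Finset.range (L + 1),
          (fun y => Δ l y - gstar l ((V l)ᵀ.mulVec y))) 2 μ
        ≤ eLpNorm (fun y => finf y - fs L y) 2 μ
          + eLpNorm (∑ l ∈ Finset.range (L + 1),
            (fun y => Δ l y - gstar l ((V l)ᵀ.mulVec y))) 2 μ :=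
          eLpNorm_add_le hF0.aestronglyMeasurable hSum.aestronglyMeasurable one_le_two
      _ ≤ _ := by
          gcongr
          exact eLpNorm_sum_le (fun l hl => (hGmem l hl).aestronglyMeasurable) one_le_two
  -- convert to real square roots
  rw [sqrt_int_sq hS]
  have hRHS_ne_top : eLpNorm (fun y => finf y - fs L y) 2 μ
      + ∑ l ∈ Finset.range (L + 1), eLpNorm
        (fun y => Δ l y - gstar l ((V l)ᵀ.mulVec y)) 2 μ ≠ ⊤ := by
    apply ENNReal.add_ne_top.mpr
    constructor
    · exact hF0.eLpNorm_ne_top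
    · exact (ENNReal.sum_lt_top.mpr (fun l hl => (hGmem l hl).eLpNorm_lt_top)).ne
  have step := ENNReal.toReal_mono hRHS_ne_top htri
  refine le_trans step ?_
  rw [ENNReal.toReal_add hF0.eLpNorm_ne_top
    (ENNReal.sum_lt_top.mpr (fun l hl => (hGmem l hl).eLpNorm_lt_top)).ne,
    ENNReal.toReal_sum (fun l hl => (hGmem l hl).eLpNorm_ne_top)]
  rw [← sqrt_int_sq hF0]
  refine add_le_add le_rfl ?_
  rw [Finset.mul_sum]
  apply Finset.sum_le_sum
  intro l hl
  rw [← sqrt_int_sq (hGmem l hl)]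
  exact (hlev l (Nat.lt_succ_iff.mp (Finset.mem_range.mp hl))).2


end
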